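/- Let n be a positive natural number and let A and B be n×n real matrices such that A is symmetric (Aᵀ = A), B is symmetric, and B is positive definite (xᵀBx > 0 for every nonzero x ∈ ℝⁿ). Then the complex matrix C := A + iB (where A and B are regarded as complex matrices via entrywise coercion ℝ → ℂ) is nonsingular, i.e. det(A + iB) ≠ 0. -/
import Mathlib


open Matrix Complex

/-- If `A` and `B` are real symmetric `n × n` matrices with `B` positive definite,
then the complex matrix `A + i B` is nonsingular. -/
theorem det_add_smul_I_ne_zero
    (n : ℕ) (hn : 0 < n)
    (A B : Matrix (Fin n) (Fin n) ℝ)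
    (hA : Aᵀ = A) (hB : Bᵀ = B)
    (hBpos : ∀ x : Fin n → ℝ, x ≠ 0 → 0 < x ⬝ᵥ B.mulVec x) :
    (A.map (Complex.ofReal) + Complex.I • B.map (Complex.ofReal)).det ≠ 0 := by
  intro hdet
  obtain ⟨z, hz, hMz⟩ := Matrix.exists_mulVec_eq_zero_iff.2 hdet
  set x : Fin n → ℝ := fun i => (z i).re with hxdef
  set y : Fin n → ℝ := fun i => (z i).im with hydef
  set a : ℂ := star z ⬝ᵥ ((A.map Complex.ofReal).mulVec z) with hadef
  set b : ℂ := star z ⬝ᵥ ((B.map Complex.ofReal).mulVec z) with hbdef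
  have hc : a + Complex.I * b = 0 := by
    rw [hadef, hbdef, ← smul_eq_mul, ← dotProduct_smul, ← Matrix.smul_mulVec,
      ← dotProduct_add, ← Matrix.add_mulVec, hMz, dotProduct_zero]
  have hAij : ∀ i j, A j i = A i j := fun i j => congrFun (congrFun hA i) j
  -- imaginary part of a is zero
  have haim : a.im = 0 := by
    have h1 : a.im = ∑ i, ∑ j, A i j * (x i * y j - y i * x j) := by
      simp only [hadef, dotProduct, Matrix.mulVec, Complex.im_sum, Pi.star_apply,
        Matrix.map_apply, dotProduct, Finset.mul_sum, Complex.mul_im, Complex.mul_re,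
        Complex.star_def, Complex.conj_re, Complex.conj_im, Complex.ofReal_re, Complex.ofReal_im]
      refine Finset.sum_congr rfl fun i _ => Finset.sum_congr rfl fun j _ => ?_
      simp only [hxdef, hydef]
      ring
    have h2 : (∑ i, ∑ j, A i j * (x i * y j - y i * x j))
        + (∑ i, ∑ j, A i j * (x i * y j - y i * x j)) = 0 := by
      nth_rewrite 2 [Finset.sum_comm]
      rw [← Finset.sum_add_distrib]
      refine Finset.sum_eq_zero fun i _ => ?_
      rw [← Finset.sum_add_distrib]
      refine Finset.sum_eq_zero fun j _ => ?_
      rw [hAij i j]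
      ring
    rw [h1]; linarith
  -- real part of b
  have hbre : b.re = x ⬝ᵥ B.mulVec x + y ⬝ᵥ B.mulVec y := by
    simp only [hbdef, dotProduct, Matrix.mulVec, Complex.re_sum, Pi.star_apply,
      Matrix.map_apply, dotProduct, Finset.mul_sum, Complex.mul_re, Complex.mul_im,
      Complex.star_def, Complex.conj_re, Complex.conj_im, Complex.ofReal_re, Complex.ofReal_im,
      ← Finset.sum_add_distrib]
    refine Finset.sum_congr rfl fun i _ => ?_
    refine Finset.sum_congr rfl fun j _ => ?_
    simp only [hxdef, hydef]
    ring
  have him : (a + Complex.I * b).im = b.re + a.im := by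
    simp [Complex.add_im, Complex.mul_im]; ring
  have hpos : 0 < x ⬝ᵥ B.mulVec x + y ⬝ᵥ B.mulVec y := by
    by_cases hx0 : x = 0
    · have hy0 : y ≠ 0 := by
        intro hy0
        apply hz
        funext i
        exact Complex.ext (by simpa [hxdef] using congrFun hx0 i)
          (by simpa [hydef] using congrFun hy0 i)
      have h1 : x ⬝ᵥ B.mulVec x = 0 := by rw [hx0]; simp
      linarith [hBpos y hy0]
    · have h2 : 0 ≤ y ⬝ᵥ B.mulVec y := by
        by_cases hy0 : y = 0
        · rw [hy0]; simp
        · linarith [hBpos y hy0]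
      linarith [hBpos x hx0]
  rw [hc] at him
  simp only [Complex.zero_im] at him
  rw [haim, hbre] at him
  linarith
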